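/- Let b ∈ B with b = b₊ - b₋ where b₊, b₋ ∈ Z^N_{≥0} have disjoint supports. Then the Γ-series F_γ(z) = Σ_{x ∈ γ+B} z^x/x! satisfies the binomial (GKZ) equation (∂/∂z)^{b₊} F_γ = (∂/∂z)^{b₋} F_γ, where (∂/∂z)^{v} denotes the iterated partial derivative of multi-order v. -/

import Mathlib

open scoped Classical

/-- The Γ-series `F_γ(z) = Σ_{x ∈ γ+B} z^x/x!` (terms with a negative exponent
coordinate vanish), as a polynomial: it is assumed (hypothesis `h`) that only finitely
many exponent vectors `d ∈ ℕ^N` satisfy `d - γ ∈ B`. -/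
noncomputable def gpoly {N : ℕ} (B : AddSubgroup (Fin N → ℤ)) (γ : Fin N → ℤ)
    (h : {d : Fin N →₀ ℕ | (fun i => (d i : ℤ)) - γ ∈ B}.Finite) :
    MvPolynomial (Fin N) ℚ :=
  ∑ d ∈ h.toFinset, ((∏ i, (d i).factorial : ℕ) : ℚ)⁻¹ • MvPolynomial.monomial d (1 : ℚ)

/-- The iterated partial derivative `(∂/∂z)^v = Π_i (∂/∂z_i)^{v_i}` of multi-order `v`. -/
noncomputable def pdPow {N : ℕ} (v : Fin N → ℕ) (p : MvPolynomial (Fin N) ℚ) :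
    MvPolynomial (Fin N) ℚ :=
  (List.finRange N).foldr (fun i q => (fun r => MvPolynomial.pderiv i r)^[v i] q) p

open MvPolynomial

lemma iter_pderiv_add {N : ℕ} (i : Fin N) (k : ℕ) (p q : MvPolynomial (Fin N) ℚ) :
    (fun r => pderiv i r)^[k] (p + q) =
      (fun r => pderiv i r)^[k] p + (fun r => pderiv i r)^[k] q := by
  induction k generalizing p q with
  | zero => simp
  | succ k ih => simp [Function.iterate_succ_apply, map_add, ih]

lemma iter_pderiv_smul {N : ℕ} (i : Fin N) (k : ℕ) (c : ℚ) (p : MvPolynomial (Fin N) ℚ) :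
    (fun r => pderiv i r)^[k] (c • p) = c • (fun r => pderiv i r)^[k] p := by
  induction k generalizing p with
  | zero => simp
  | succ k ih => simp [Function.iterate_succ_apply, ih]

lemma iter_pderiv_monomial {N : ℕ} (i : Fin N) (k : ℕ) (d : Fin N →₀ ℕ) (a : ℚ) :
    (fun r => pderiv i r)^[k] (monomial d a) =
      monomial (d - Finsupp.single i k) (a * (d i).descFactorial k) := by
  induction k with
  | zero => simp
  | succ k ih =>
      rw [Function.iterate_succ_apply', ih, pderiv_monomial]
      have he : d - Finsupp.single i k - Finsupp.single i 1
          = d - Finsupp.single i (k+1) := by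
        ext j
        simp only [Finsupp.tsub_apply, Finsupp.single_apply]
        split <;> omega
      have h1 : (d - Finsupp.single i k) i = d i - k := by
        simp [Finsupp.tsub_apply]
      rw [he, h1, Nat.descFactorial_succ]
      congr 1
      push_cast
      ring

lemma foldr_monomial {N : ℕ} (v : Fin N → ℕ) (l : List (Fin N)) (hl : l.Nodup)
    (d : Fin N →₀ ℕ) (a : ℚ) :
    l.foldr (fun i q => (fun r => pderiv i r)^[v i] q) (monomial d a) =
      monomial (d - ∑ i ∈ l.toFinset, Finsupp.single i (v i))
        (a * ∏ i ∈ l.toFinset, (d i).descFactorial (v i)) := by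
  induction l with
  | nil => simp
  | cons i l ih =>
      have hi : i ∉ l := (List.nodup_cons.mp hl).1
      have hl' : l.Nodup := (List.nodup_cons.mp hl).2
      have hit : i ∉ l.toFinset := by simpa using hi
      rw [List.foldr_cons, ih hl', iter_pderiv_monomial]
      have hS : (d - ∑ j ∈ l.toFinset, Finsupp.single j (v j)) i = d i := by
        rw [Finsupp.tsub_apply]
        rw [Finset.sum_apply']
        rw [Finset.sum_eq_zero (fun j hj => ?_)]
        · simp
        · exact Finsupp.single_apply_eq_zero.mpr (fun hji => absurd (hji ▸ hj) hit)
      rw [hS]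
      have hins : (i :: l).toFinset = insert i l.toFinset := by simp
      rw [hins, Finset.sum_insert hit, Finset.prod_insert hit]
      congr 1
      · rw [tsub_tsub, add_comm]
      · push_cast; ring

lemma pdPow_monomial {N : ℕ} (v : Fin N → ℕ) (d : Fin N →₀ ℕ) (a : ℚ) :
    pdPow v (monomial d a) =
      monomial (d - Finsupp.equivFunOnFinite.symm v)
        (a * ∏ i, (d i).descFactorial (v i)) := by
  rw [pdPow, foldr_monomial v _ (List.nodup_finRange N)]
  have h1 : (List.finRange N).toFinset = Finset.univ := by
    ext x; simp [List.mem_finRange]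
  rw [h1]
  congr 2
  ext j
  simp only [Finsupp.tsub_apply]
  rw [Finset.sum_apply']
  simp [Finsupp.single_apply, Finsupp.equivFunOnFinite]

lemma pdPow_add {N : ℕ} (v : Fin N → ℕ) (p q : MvPolynomial (Fin N) ℚ) :
    pdPow v (p + q) = pdPow v p + pdPow v q := by
  unfold pdPow
  induction (List.finRange N) with
  | nil => simp
  | cons i l ih => simp [List.foldr_cons, ih, iter_pderiv_add]

lemma pdPow_smul {N : ℕ} (v : Fin N → ℕ) (c : ℚ) (p : MvPolynomial (Fin N) ℚ) :
    pdPow v (c • p) = c • pdPow v p := by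
  unfold pdPow
  induction (List.finRange N) with
  | nil => simp
  | cons i l ih => simp [List.foldr_cons, ih, iter_pderiv_smul]

lemma pdPow_zero' {N : ℕ} (v : Fin N → ℕ) : pdPow v (0 : MvPolynomial (Fin N) ℚ) = 0 := by
  unfold pdPow
  induction (List.finRange N) with
  | nil => simp
  | cons i l ih =>
      simp only [List.foldr_cons, ih]
      induction (v i) with
      | zero => simp
      | succ k ih2 => simp [Function.iterate_succ_apply, ih2]

lemma pdPow_sum {N : ℕ} (v : Fin N → ℕ) {α : Type*} (s : Finset α)
    (f : α → MvPolynomial (Fin N) ℚ) :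
    pdPow v (∑ d ∈ s, f d) = ∑ d ∈ s, pdPow v (f d) := by
  classical
  induction s using Finset.induction_on with
  | empty => simp [pdPow_zero']
  | insert _ _ hx ih => rw [Finset.sum_insert hx, pdPow_add, ih, Finset.sum_insert hx]

lemma coeff_pdPow_gpoly {N : ℕ} (B : AddSubgroup (Fin N → ℤ)) (γ : Fin N → ℤ)
    (h : {d : Fin N →₀ ℕ | (fun i => (d i : ℤ)) - γ ∈ B}.Finite)
    (v : Fin N → ℕ) (m : Fin N →₀ ℕ) :
    MvPolynomial.coeff m (pdPow v (gpoly B γ h)) =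
      if (fun i => ((m i + v i : ℕ) : ℤ)) - γ ∈ B
        then ((∏ i, (m i).factorial : ℕ) : ℚ)⁻¹ else 0 := by
  classical
  set V : Fin N →₀ ℕ := Finsupp.equivFunOnFinite.symm v with hV
  rw [gpoly, pdPow_sum]
  simp only [pdPow_smul, pdPow_monomial, one_mul]
  rw [MvPolynomial.coeff_sum]
  simp only [MvPolynomial.coeff_smul, MvPolynomial.coeff_monomial, smul_eq_mul]
  have key : ∀ d ∈ h.toFinset,
      (((∏ i, (d i).factorial : ℕ) : ℚ)⁻¹ *
        if d - V = m then ((∏ i, (d i).descFactorial (v i) : ℕ) : ℚ) else 0)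
      = if d = m + V then ((∏ i, (m i).factorial : ℕ) : ℚ)⁻¹ else 0 := by
    intro d _
    by_cases hd : d = m + V
    · subst hd
      have h1 : m + V - V = m := add_tsub_cancel_right m V
      rw [if_pos h1, if_pos rfl]
      have hVi : ∀ i, V i = v i := fun i => rfl
      simp only [Finsupp.add_apply, hVi]
      push_cast
      rw [← Finset.prod_inv_distrib, ← Finset.prod_mul_distrib, ← Finset.prod_inv_distrib]
      refine Finset.prod_congr rfl (fun i _ => ?_)
      have hfac : ((m i).factorial : ℚ) * ((m i + v i).descFactorial (v i) : ℕ) =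
          ((m i + v i).factorial : ℚ) := by
        rw [← Nat.cast_mul]
        congr 1
        have := Nat.factorial_mul_descFactorial (Nat.le_add_left (v i) (m i))
        simpa using this
      have h0 : ((m i + v i).factorial : ℚ) ≠ 0 := Nat.cast_ne_zero.mpr (Nat.factorial_ne_zero _)
      have h0' : ((m i).factorial : ℚ) ≠ 0 := Nat.cast_ne_zero.mpr (Nat.factorial_ne_zero _)
      field_simp
      linear_combination hfac
    · rw [if_neg hd]
      by_cases hm : d - V = m
      · rw [if_pos hm]
        have hex : ∃ i, d i < v i := by
          by_contra hc
          push_neg at hc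
          apply hd
          ext j
          have h5 : (d - V) j = m j := by rw [hm]
          rw [Finsupp.tsub_apply] at h5
          have hVj : V j = v j := rfl
          rw [hVj] at h5
          rw [Finsupp.add_apply, hVj]
          have := hc j
          omega
        obtain ⟨i, hi⟩ := hex
        have : (∏ i, (d i).descFactorial (v i)) = 0 :=
          Finset.prod_eq_zero (Finset.mem_univ i) (Nat.descFactorial_eq_zero_iff_lt.mpr hi)
        rw [this]
        simp
      · rw [if_neg hm, mul_zero]
  rw [Finset.sum_congr rfl key, Finset.sum_ite_eq' h.toFinset (m + V)]
  have hmem : (m + V) ∈ h.toFinset ↔ (fun i => ((m i + v i : ℕ) : ℤ)) - γ ∈ B := by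
    rw [Set.Finite.mem_toFinset, Set.mem_setOf_eq]
    constructor <;> intro hx <;> convert hx using 2 <;> rfl
  by_cases hc : (fun i => ((m i + v i : ℕ) : ℤ)) - γ ∈ B
  · rw [if_pos (hmem.mpr hc), if_pos hc]
  · rw [if_neg (fun hx => hc (hmem.mp hx)), if_neg hc]

/-- If `b = b₊ - b₋ ∈ B` with `b₊, b₋ ∈ ℕ^N` of disjoint supports, then the Γ-series
satisfies the binomial (GKZ) equation `(∂/∂z)^{b₊} F_γ = (∂/∂z)^{b₋} F_γ`. -/
theorem stmt_10 (N : ℕ) (B : AddSubgroup (Fin N → ℤ))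
    (h : ∀ γ : Fin N → ℤ, {d : Fin N →₀ ℕ | (fun i => (d i : ℤ)) - γ ∈ B}.Finite)
    (γ : Fin N → ℤ) (bp bm : Fin N → ℕ)
    (hb : (fun i => (bp i : ℤ) - (bm i : ℤ)) ∈ B)
    (hdisj : ∀ i, bp i = 0 ∨ bm i = 0) :
    pdPow bp (gpoly B γ (h γ)) = pdPow bm (gpoly B γ (h γ)) := by

  ext m
  rw [coeff_pdPow_gpoly, coeff_pdPow_gpoly]
  have hiff : ((fun i => ((m i + bp i : ℕ) : ℤ)) - γ ∈ B) ↔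
      ((fun i => ((m i + bm i : ℕ) : ℤ)) - γ ∈ B) := by
    constructor
    · intro hx
      have h2 := B.sub_mem hx hb
      have h3 : (fun i => ((m i + bp i : ℕ) : ℤ)) - γ - (fun i => (bp i : ℤ) - (bm i : ℤ))
          = (fun i => ((m i + bm i : ℕ) : ℤ)) - γ := by
        funext i
        simp only [Pi.sub_apply]
        push_cast
        ring
      rwa [h3] at h2
    · intro hx
      have h2 := B.add_mem hx hb
      have h3 : (fun i => ((m i + bm i : ℕ) : ℤ)) - γ + (fun i => (bp i : ℤ) - (bm i : ℤ))
          = (fun i => ((m i + bp i : ℕ) : ℤ)) - γ := by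
        funext i
        simp only [Pi.add_apply, Pi.sub_apply]
        push_cast
        ring
      rwa [h3] at h2
  by_cases hc : (fun i => ((m i + bp i : ℕ) : ℤ)) - γ ∈ B
  · rw [if_pos hc, if_pos (hiff.mp hc)]
  · rw [if_neg hc, if_neg (fun hx => hc (hiff.mpr hx))]
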